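/- Let U_1, …, U_n be convex subsets of ℝ^d that are either all open or all closed, let C = code(U, ℝ^d), and let x ∈ A_σ and y ∈ A_τ for codewords σ, τ ∈ C. Then there exist parameters 0 = t_1 ≤ t_2 ≤ … ≤ t_ℓ = 1 and codewords τ_1 = σ, τ_2, …, τ_ℓ = τ of C such that: (i) (1−t_r)x + t_r y ∈ A_{τ_r} for each r; (ii) every point of the segment from x to y has its codeword among τ_1, …, τ_ℓ; (iii) for each r, τ_r ⊆ τ_{r+1} or τ_{r+1} ⊆ τ_r; and (iv) τ_i ∩ τ_j ⊆ τ_m whenever 1 ≤ i < m < j ≤ ℓ. In other words, the sequence of atoms along the segment from x to y forms a feasible walk in the codeword containment graph G_C. -/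

import Mathlib

open Set

lemma frontier_finite_of_ordConnected {s : Set ℝ} (hs : s.OrdConnected) :
    (frontier s).Finite := by
  have mid : ∀ a b c : ℝ, a ∈ closure s → c ∈ closure s → a < b → b < c →
      b ∈ interior s := by
    intro a b c ha hc hab hbc
    obtain ⟨a', ha'lt, ha's⟩ := mem_closure_iff.1 ha (Iio b) isOpen_Iio hab
    obtain ⟨c', hc'gt, hc's⟩ := mem_closure_iff.1 hc (Ioi b) isOpen_Ioi hbc
    have hsub : Icc a' c' ⊆ s := hs.out ha's hc's
    have : Ioo a' c' ⊆ interior s := by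
      rw [← interior_Icc]; exact interior_mono hsub
    exact this ⟨ha'lt, hc'gt⟩
  have no3 : ∀ u v w : ℝ, u ∈ frontier s → v ∈ frontier s → w ∈ frontier s →
      u < v → v < w → False := by
    intro u v w hu hv hw h1 h2
    exact hv.2 (mid u v w hu.1 hw.1 h1 h2)
  have tri : ∀ u v w : ℝ, u ∈ frontier s → v ∈ frontier s → w ∈ frontier s →
      u ≠ v → v ≠ w → u ≠ w → False := by
    intro u v w hu hv hw huv hvw huw
    rcases lt_or_gt_of_ne huv with h1 | h1 <;>
      rcases lt_or_gt_of_ne hvw with h2 | h2 <;>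
      rcases lt_or_gt_of_ne huw with h3 | h3
    · exact no3 u v w hu hv hw h1 h2
    · exact no3 u v w hu hv hw h1 h2
    · exact no3 u w v hu hw hv h3 h2
    · exact no3 w u v hw hu hv h3 h1
    · exact no3 v u w hv hu hw h1 h3
    · exact no3 v w u hv hw hu h2 h3
    · linarith
    · exact no3 w v u hw hv hu h2 h1
  rcases Set.eq_empty_or_nonempty (frontier s) with h | ⟨a, ha⟩
  · simp [h]
  by_cases h2 : frontier s ⊆ {a}
  · exact (Set.finite_singleton a).subset h2
  obtain ⟨b, hb, hba⟩ := Set.not_subset.1 h2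
  refine ((Set.finite_singleton b).insert a).subset ?_
  intro c hc
  by_contra hc'
  simp only [Set.mem_insert_iff, Set.mem_singleton_iff, not_or] at hc' hba
  exact tri a b c ha hb hc (fun h => hba h.symm) (fun h => hc'.2 h.symm)
    (fun h => hc'.1 h.symm)



/-- The atom of a subset `σ` of neurons with respect to a family of sets `U`:
`A_σ = (⋂_{i ∈ σ} U_i) \ (⋃_{j ∉ σ} U_j)`. -/
def atomOf {n : ℕ} {X : Type*} (U : Fin n → Set X) (σ : Set (Fin n)) : Set X :=
  (⋂ i ∈ σ, U i) \ (⋃ j ∈ σᶜ, U j)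

/-- The combinatorial code of a family of sets: the collection of subsets with
nonempty atom. -/
def codeOf {n : ℕ} {X : Type*} (U : Fin n → Set X) : Set (Set (Fin n)) :=
  {σ | (atomOf U σ).Nonempty}

/-- The sequence of atoms along a straight-line segment between points of two atoms of a
convex (open or closed) realization forms a feasible walk in the codeword containment
graph `G_C`. -/
theorem stmt1 {n d : ℕ} (U : Fin n → Set (EuclideanSpace ℝ (Fin d)))
    (hconv : ∀ i, Convex ℝ (U i))
    (hoc : (∀ i, IsOpen (U i)) ∨ (∀ i, IsClosed (U i)))
    (σ τ : Set (Fin n)) (x y : EuclideanSpace ℝ (Fin d))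
    (hx : x ∈ atomOf U σ) (hy : y ∈ atomOf U τ) :
    ∃ (ℓ : ℕ) (t : ℕ → ℝ) (c : ℕ → Set (Fin n)),
      1 ≤ ℓ ∧ t 0 = 0 ∧ t (ℓ - 1) = 1 ∧
      (∀ r, r + 1 < ℓ → t r ≤ t (r + 1)) ∧
      c 0 = σ ∧ c (ℓ - 1) = τ ∧
      (∀ r < ℓ, c r ∈ codeOf U) ∧
      -- (i): the point at parameter `t r` lies in the atom of `c r`
      (∀ r < ℓ, (1 - t r) • x + t r • y ∈ atomOf U (c r)) ∧
      -- (ii): every point of the segment has its codeword among `c 0, …, c (ℓ-1)`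
      (∀ s ∈ Set.Icc (0:ℝ) 1, ∃ r < ℓ, (1 - s) • x + s • y ∈ atomOf U (c r)) ∧
      -- (iii): consecutive codewords are nested, i.e. the sequence is a walk in `G_C`
      (∀ r, r + 1 < ℓ → c r ⊆ c (r + 1) ∨ c (r + 1) ⊆ c r) ∧
      -- (iv): feasibility
      (∀ i m j, i < m → m < j → j < ℓ → c i ∩ c j ⊆ c m) := by
    classical
  set p : ℝ → EuclideanSpace ℝ (Fin d) := fun s => AffineMap.lineMap x y s with hp
  have hpval : ∀ s : ℝ, (1 - s) • x + s • y = p s := fun s =>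
    (AffineMap.lineMap_apply_module x y s).symm
  set T : Fin n → Set ℝ := fun i => p ⁻¹' (U i) with hT
  have hTconv : ∀ i, (T i).OrdConnected :=
    fun i => ((hconv i).affine_preimage (AffineMap.lineMap x y)).ordConnected
  have hpc : Continuous p := AffineMap.lineMap_continuous
  set cw : ℝ → Set (Fin n) := fun s => {i | s ∈ T i} with hcw
  have hmem_atom : ∀ s : ℝ, p s ∈ atomOf U (cw s) := by
    intro s
    refine ⟨Set.mem_iInter₂.2 fun i hi => hi, fun h => ?_⟩
    obtain ⟨j, hj, hmem⟩ := Set.mem_iUnion₂.1 h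
    exact hj hmem
  have hatom_eq : ∀ (s : ℝ) (σ' : Set (Fin n)), p s ∈ atomOf U σ' → σ' = cw s := by
    intro s σ' hmem
    ext i
    constructor
    · intro hi; exact Set.mem_iInter₂.1 hmem.1 i hi
    · intro hi; by_contra hni
      exact hmem.2 (Set.mem_iUnion₂.2 ⟨i, hni, hi⟩)
  have hp0 : p 0 = x := by simp [hp]
  have hp1 : p 1 = y := by simp [hp]
  have hσ : σ = cw 0 := hatom_eq 0 σ (hp0 ▸ hx)
  have hτ : τ = cw 1 := hatom_eq 1 τ (hp1 ▸ hy)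
  -- breakpoint set
  set S : Set ℝ := insert 0 (insert 1 (⋃ i, frontier (T i) ∩ Icc (0:ℝ) 1)) with hS
  have hSfin : S.Finite := by
    apply Set.Finite.insert; apply Set.Finite.insert
    exact Set.finite_iUnion fun i =>
      (frontier_finite_of_ordConnected (hTconv i)).inter_of_left _
  have hSIcc : S ⊆ Icc (0:ℝ) 1 := by
    intro z hz
    rcases hz with rfl | hz
    · exact ⟨le_refl _, zero_le_one⟩
    rcases hz with rfl | hz
    · exact ⟨zero_le_one, le_refl _⟩
    obtain ⟨i, hi⟩ := Set.mem_iUnion.1 hz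
    exact hi.2
  set L : List ℝ := hSfin.toFinset.sort (· ≤ ·) with hL
  set k : ℕ := L.length with hk
  set b : ℕ → ℝ := fun j => L.getD j 1 with hb
  have hmemL : ∀ z : ℝ, z ∈ L ↔ z ∈ S := by
    intro z
    rw [hL, Finset.mem_sort, Set.Finite.mem_toFinset]
  have hbget : ∀ j (h : j < k), b j = L[j] := fun j h => List.getD_eq_getElem L 1 h
  have hbmemS : ∀ j, j < k → b j ∈ S := by
    intro j hj
    rw [hbget j hj]
    exact (hmemL _).1 (List.getElem_mem hj)
  have hbIcc : ∀ j, j < k → b j ∈ Icc (0:ℝ) 1 := fun j hj => hSIcc (hbmemS j hj)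
  have hsorted : L.Pairwise (· < ·) := (Finset.sortedLT_sort _).pairwise
  have hstrict : ∀ j1 j2, j1 < j2 → j2 < k → b j1 < b j2 := by
    intro j1 j2 h12 h2
    rw [hbget j1 (h12.trans h2), hbget j2 h2]
    exact List.pairwise_iff_getElem.1 hsorted j1 j2 (h12.trans h2) h2 h12
  have h0L : (0:ℝ) ∈ L := (hmemL 0).2 (Set.mem_insert _ _)
  have h1L : (1:ℝ) ∈ L := (hmemL 1).2 (Set.mem_insert_of_mem _ (Set.mem_insert _ _))
  obtain ⟨j0, hj0k, hj0⟩ := List.mem_iff_getElem.1 h0L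
  obtain ⟨j1, hj1k, hj1⟩ := List.mem_iff_getElem.1 h1L
  have hbj0 : b j0 = 0 := by rw [hbget j0 hj0k]; exact hj0
  have hbj1 : b j1 = 1 := by rw [hbget j1 hj1k]; exact hj1
  have hk2 : 2 ≤ k := by
    rcases Nat.lt_or_ge k 2 with h | h
    · exfalso
      have : j0 = j1 := by omega
      rw [this, hbj1] at hbj0; norm_num at hbj0
    · exact h
  have hb0 : b 0 = 0 := by
    rcases Nat.eq_zero_or_pos j0 with h | h
    · rw [← h]; exact hbj0
    · exfalso
      have h1 := hstrict 0 j0 h hj0k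
      have h2 := (hbIcc 0 (by omega)).1
      rw [hbj0] at h1; linarith
  have hblast : b (k - 1) = 1 := by
    rcases Nat.lt_or_ge j1 (k - 1) with h | h
    · exfalso
      have h1 := hstrict j1 (k - 1) h (by omega)
      have h2 := (hbIcc (k - 1) (by omega)).2
      rw [hbj1] at h1; linarith
    · have : j1 = k - 1 := by omega
      rw [← this]; exact hbj1
  have hble : ∀ j, b j ≤ 1 := by
    intro j
    rcases Nat.lt_or_ge j k with h | h
    · exact (hbIcc j h).2
    · rw [hb]; exact le_of_eq (List.getD_eq_default _ _ (by omega : L.length ≤ j))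
  have hbmono : Monotone b := by
    apply monotone_nat_of_le_succ
    intro j
    rcases Nat.lt_or_ge (j + 1) k with h | h
    · exact (hstrict j (j + 1) (Nat.lt_succ_self j) h).le
    · have h1 : b (j + 1) = 1 := by
        rw [hb]; exact List.getD_eq_default _ _ (by omega : L.length ≤ j + 1)
      rw [h1]; exact hble j
  -- gaps are disjoint from all frontiers
  have hgapF : ∀ j, j + 1 < k → ∀ i : Fin n, ∀ e ∈ frontier (T i),
      e ∉ Ioo (b j) (b (j + 1)) := by
    intro j hj i e he hcon
    have heI : e ∈ Icc (0:ℝ) 1 :=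
      ⟨le_trans (hbIcc j (by omega)).1 hcon.1.le, le_trans hcon.2.le (hbIcc (j+1) hj).2⟩
    have heS : e ∈ S := by
      rw [hS]
      exact Set.mem_insert_of_mem _ (Set.mem_insert_of_mem _
        (Set.mem_iUnion.2 ⟨i, he, heI⟩))
    obtain ⟨j', hj'k, hj'⟩ := List.mem_iff_getElem.1 ((hmemL e).2 heS)
    have hbe : b j' = e := by rw [hbget j' hj'k]; exact hj'
    rcases Nat.lt_or_ge j' (j + 1) with h | h
    · have := hbmono (by omega : j' ≤ j)
      rw [hbe] at this
      exact absurd hcon.1 (not_lt.2 this)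
    · have := hbmono (h : j + 1 ≤ j')
      rw [hbe] at this
      exact absurd hcon.2 (not_lt.2 this)
  -- constancy of membership on gaps
  have hconst : ∀ j, j + 1 < k → ∀ i : Fin n, ∀ s1 ∈ Ioo (b j) (b (j + 1)),
      ∀ s2 ∈ Ioo (b j) (b (j + 1)), s1 ∈ T i → s2 ∈ T i := by
    intro j hj i s1 hs1 s2 hs2 hmem1
    have hcover : Ioo (b j) (b (j + 1)) ⊆ interior (T i) ∪ (closure (T i))ᶜ := by
      intro z hz
      by_cases hzc : z ∈ closure (T i)
      · left
        by_contra hzi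
        exact hgapF j hj i z ⟨hzc, hzi⟩ hz
      · right; exact hzc
    rcases isPreconnected_Ioo.subset_or_subset isOpen_interior
        isClosed_closure.isOpen_compl
        (disjoint_compl_right.mono_left interior_subset_closure) hcover with h | h
    · exact interior_subset (h hs2)
    · exact absurd (subset_closure hmem1) (Set.mem_compl_iff _ _ |>.1 (h hs1))
  -- the walk
  set t : ℕ → ℝ := fun r => if Even r then b (r / 2) else (b (r / 2) + b (r / 2 + 1)) / 2
    with ht
  set c : ℕ → Set (Fin n) := fun r => cw (t r) with hc
  have hteven : ∀ j, t (2 * j) = b j := by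
    intro j
    rw [ht]
    simp only [if_pos (even_two_mul j)]
    congr 1
    omega
  have htodd : ∀ j, t (2 * j + 1) = (b j + b (j + 1)) / 2 := by
    intro j
    rw [ht]
    simp only []
    rw [if_neg (by simp [Nat.even_add_one, Nat.even_add_one])]
    have h1 : (2 * j + 1) / 2 = j := by omega
    rw [h1]
  have htmono : Monotone t := by
    apply monotone_nat_of_le_succ
    intro r
    rcases Nat.even_or_odd r with ⟨j, hj⟩ | ⟨j, hj⟩
    · have hr : r = 2 * j := by omega
      subst hr
      have h1 : 2 * j + 1 = 2 * j + 1 := rfl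
      rw [hteven j, htodd j]
      have := hbmono (Nat.le_succ j)
      linarith
    · have hr : r = 2 * j + 1 := by omega
      subst hr
      have h2 : 2 * j + 1 + 1 = 2 * (j + 1) := by ring
      rw [htodd j, h2, hteven (j + 1)]
      have := hbmono (Nat.le_succ j)
      linarith
  refine ⟨2 * k - 1, t, c, by omega, ?_, ?_, fun r _ => htmono (Nat.le_succ r), ?_, ?_,
    ?_, ?_, ?_, ?_, ?_⟩
  · -- t 0 = 0
    have := hteven 0
    simpa [hb0] using this
  · -- t (ℓ - 1) = 1
    have h : 2 * k - 1 - 1 = 2 * (k - 1) := by omega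
    rw [h, hteven, hblast]
  · -- c 0 = σ
    have h0 : t 0 = 0 := by have := hteven 0; simpa [hb0] using this
    rw [hc]; simp only []; rw [h0, ← hσ]
  · -- c (ℓ - 1) = τ
    have h : 2 * k - 1 - 1 = 2 * (k - 1) := by omega
    rw [hc]; simp only []; rw [h, hteven, hblast, ← hτ]
  · -- codewords
    intro r _
    exact ⟨p (t r), hmem_atom (t r)⟩
  · -- (i)
    intro r _
    rw [hpval]
    exact hmem_atom (t r)
  · -- (ii)
    intro s hs
    by_cases hsL : s ∈ L
    · obtain ⟨j, hjk, hj⟩ := List.mem_iff_getElem.1 hsL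
      have hbj : b j = s := by rw [hbget j hjk]; exact hj
      refine ⟨2 * j, by omega, ?_⟩
      rw [hpval, hc]
      simp only []
      rw [hteven, hbj]
      exact hmem_atom s
    · have hs0 : s ≠ 0 := fun h => hsL (h ▸ h0L)
      have hs1 : s ≠ 1 := fun h => hsL (h ▸ h1L)
      have hs0' : 0 < s := lt_of_le_of_ne hs.1 (Ne.symm hs0)
      have hs1' : s < 1 := lt_of_le_of_ne hs.2 hs1
      set P : ℕ → Prop := fun j => b j < s with hP
      set j0 : ℕ := Nat.findGreatest P (k - 2) with hj0def
      have hPj0 : P j0 :=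
        Nat.findGreatest_spec (Nat.zero_le _) (by rw [hP]; simpa [hb0] using hs0')
      have hj0le : j0 ≤ k - 2 := Nat.findGreatest_le _
      have hnot : ¬ b (j0 + 1) < s := by
        rcases Nat.lt_or_ge (k - 2) (j0 + 1) with h | h
        · have : j0 + 1 = k - 1 := by omega
          rw [this, hblast]
          exact not_lt.2 hs1'.le
        · exact Nat.findGreatest_is_greatest (Nat.lt_succ_self j0) h
      have hj1k : j0 + 1 < k := by omega
      have hsne : s ≠ b (j0 + 1) := by
        intro h
        exact hsL (h ▸ (List.mem_iff_getElem.2 ⟨j0 + 1, hj1k, (hbget _ hj1k).symm⟩))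
      have hsIoo : s ∈ Ioo (b j0) (b (j0 + 1)) :=
        ⟨hPj0, lt_of_le_of_ne (not_lt.1 hnot) hsne⟩
      have hmid : (b j0 + b (j0 + 1)) / 2 ∈ Ioo (b j0) (b (j0 + 1)) :=
        ⟨by have h1 := hsIoo.1; have h2 := hsIoo.2; linarith,
         by have h1 := hsIoo.1; have h2 := hsIoo.2; linarith⟩
      refine ⟨2 * j0 + 1, by omega, ?_⟩
      have hcwsm : cw s = cw ((b j0 + b (j0 + 1)) / 2) := by
        ext i
        exact ⟨fun hi => hconst j0 hj1k i s hsIoo _ hmid hi,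
               fun hi => hconst j0 hj1k i _ hmid s hsIoo hi⟩
      rw [hpval, hc]
      simp only []
      rw [htodd, ← hcwsm]
      exact hmem_atom s
  · -- (iii)
    intro r hr
    rcases Nat.even_or_odd r with ⟨j, hj⟩ | ⟨j, hj⟩
    · -- r = 2 * j
      have hr2 : r = 2 * j := by omega
      subst hr2
      have hjk : j + 1 < k := by omega
      have hgap : b j < b (j + 1) := hstrict j (j + 1) (Nat.lt_succ_self j) hjk
      have hmidIoo : (b j + b (j + 1)) / 2 ∈ Ioo (b j) (b (j + 1)) :=
        ⟨by linarith, by linarith⟩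
      rcases hoc with hop | hcl
      · left
        intro i hi
        have hbT : t (2 * j) ∈ T i := hi
        rw [hteven] at hbT
        have hTo : IsOpen (T i) := (hop i).preimage hpc
        obtain ⟨ε, hε, hball⟩ := Metric.isOpen_iff.1 hTo (b j) hbT
        have hmin : 0 < min ε (b (j + 1) - b j) := lt_min hε (by linarith)
        have hminε : min ε (b (j + 1) - b j) ≤ ε := min_le_left _ _
        have hming : min ε (b (j + 1) - b j) ≤ b (j + 1) - b j := min_le_right _ _
        have hs'T : b j + min ε (b (j + 1) - b j) / 2 ∈ T i := by
          apply hball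
          rw [Metric.mem_ball, Real.dist_eq]
          have h0 : b j + min ε (b (j + 1) - b j) / 2 - b j
              = min ε (b (j + 1) - b j) / 2 := by ring
          rw [h0, abs_of_pos (by linarith)]
          linarith
        have hs'Ioo : b j + min ε (b (j + 1) - b j) / 2 ∈ Ioo (b j) (b (j + 1)) :=
          ⟨by linarith, by linarith⟩
        show t (2 * j + 1) ∈ T i
        rw [htodd]
        exact hconst j hjk i _ hs'Ioo _ hmidIoo hs'T
      · right
        intro i hi
        have hmidT : t (2 * j + 1) ∈ T i := hi
        rw [htodd] at hmidT
        have hIooT : Ioo (b j) (b (j + 1)) ⊆ T i :=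
          fun z hz => hconst j hjk i _ hmidIoo z hz hmidT
        have hTc : IsClosed (T i) := (hcl i).preimage hpc
        have hcl1 : b j ∈ closure (Ioo (b j) (b (j + 1))) := by
          rw [closure_Ioo (ne_of_lt hgap)]
          exact ⟨le_refl _, hgap.le⟩
        have h2 : b j ∈ closure (T i) := closure_mono hIooT hcl1
        rw [hTc.closure_eq] at h2
        show t (2 * j) ∈ T i
        rw [hteven]
        exact h2
    · -- r = 2 * j + 1
      have hr2 : r = 2 * j + 1 := by omega
      subst hr2
      have hjk : j + 1 < k := by omega
      have hnext : 2 * j + 1 + 1 = 2 * (j + 1) := by ring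
      have hgap : b j < b (j + 1) := hstrict j (j + 1) (Nat.lt_succ_self j) hjk
      have hmidIoo : (b j + b (j + 1)) / 2 ∈ Ioo (b j) (b (j + 1)) :=
        ⟨by linarith, by linarith⟩
      rcases hoc with hop | hcl
      · right
        intro i hi
        have hbT : t (2 * j + 1 + 1) ∈ T i := hi
        rw [hnext, hteven] at hbT
        have hTo : IsOpen (T i) := (hop i).preimage hpc
        obtain ⟨ε, hε, hball⟩ := Metric.isOpen_iff.1 hTo (b (j + 1)) hbT
        have hmin : 0 < min ε (b (j + 1) - b j) := lt_min hε (by linarith)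
        have hminε : min ε (b (j + 1) - b j) ≤ ε := min_le_left _ _
        have hming : min ε (b (j + 1) - b j) ≤ b (j + 1) - b j := min_le_right _ _
        have hs'T : b (j + 1) - min ε (b (j + 1) - b j) / 2 ∈ T i := by
          apply hball
          rw [Metric.mem_ball, Real.dist_eq]
          have h0 : b (j + 1) - min ε (b (j + 1) - b j) / 2 - b (j + 1)
              = -(min ε (b (j + 1) - b j) / 2) := by ring
          rw [h0, abs_neg, abs_of_pos (by linarith)]
          linarith
        have hs'Ioo : b (j + 1) - min ε (b (j + 1) - b j) / 2 ∈ Ioo (b j) (b (j + 1)) :=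
          ⟨by linarith, by linarith⟩
        show t (2 * j + 1) ∈ T i
        rw [htodd]
        exact hconst j hjk i _ hs'Ioo _ hmidIoo hs'T
      · left
        intro i hi
        have hmidT : t (2 * j + 1) ∈ T i := hi
        rw [htodd] at hmidT
        have hIooT : Ioo (b j) (b (j + 1)) ⊆ T i :=
          fun z hz => hconst j hjk i _ hmidIoo z hz hmidT
        have hTc : IsClosed (T i) := (hcl i).preimage hpc
        have hcl1 : b (j + 1) ∈ closure (Ioo (b j) (b (j + 1))) := by
          rw [closure_Ioo (ne_of_lt hgap)]
          exact ⟨hgap.le, le_refl _⟩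
        have h2 : b (j + 1) ∈ closure (T i) := closure_mono hIooT hcl1
        rw [hTc.closure_eq] at h2
        show t (2 * j + 1 + 1) ∈ T i
        rw [hnext, hteven]
        exact h2
  · -- (iv)
    intro i m j him hmj hjℓ
    intro k' hk'
    have h1 : t i ∈ T k' := hk'.1
    have h2 : t j ∈ T k' := hk'.2
    exact (hTconv k').out h1 h2 ⟨htmono him.le, htmono hmj.le⟩
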